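/- Let ẑ ∈ ℝ^b with ẑ ≠ 0, and define cos(z, ẑ) = ⟨z, ẑ⟩/(‖z‖‖ẑ‖) for z ≠ 0, with the convention cos(0, ẑ) = 1. Suppose φ : ℝ^b → ℝ is convex, nonnegative, satisfies φ(0) = 0, and satisfies property (P2): for all z', z'' with ‖z'‖ = ‖z''‖ and cos(z'', ẑ) ≥ cos(z', ẑ), one has φ(z') ≥ φ(z''). Then for all z, z' ∈ ℝ^b with ‖z'‖ ≥ ‖z‖ and cos(z, ẑ) = cos(z', ẑ), one has φ(z') ≥ φ(z). -/

import Mathlib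

open RealInnerProductSpace

open Classical in
/-- The cosine of the angle between `z` and `zh`, with the convention that it
equals `1` when `z = 0`. -/
noncomputable def cosAngle {b : ℕ} (z zh : EuclideanSpace ℝ (Fin b)) : ℝ :=
  if z = 0 then 1 else ⟪z, zh⟫ / (‖z‖ * ‖zh‖)

lemma cosAngle_smul {b : ℕ} (z zh : EuclideanSpace ℝ (Fin b)) (c : ℝ) (hc : 0 < c)
    (hz : z ≠ 0) : cosAngle (c • z) zh = cosAngle z zh := by
  have hcz : c • z ≠ 0 := smul_ne_zero hc.ne' hz
  simp only [cosAngle, if_neg hcz, if_neg hz, inner_smul_left, norm_smul,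
    Real.norm_eq_abs, abs_of_pos hc, RCLike.conj_to_real]
  field_simp

theorem stmt_3 {b : ℕ} (zh : EuclideanSpace ℝ (Fin b)) (hzh : zh ≠ 0)
    (φ : EuclideanSpace ℝ (Fin b) → ℝ)
    (hconv : ConvexOn ℝ Set.univ φ)
    (hnonneg : ∀ z, 0 ≤ φ z)
    (hzero : φ 0 = 0)
    (hP2 : ∀ z' z'' : EuclideanSpace ℝ (Fin b),
      ‖z'‖ = ‖z''‖ → cosAngle z' zh ≤ cosAngle z'' zh → φ z'' ≤ φ z')
    (z z' : EuclideanSpace ℝ (Fin b))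
    (hnorm : ‖z‖ ≤ ‖z'‖)
    (hcos : cosAngle z zh = cosAngle z' zh) :
    φ z ≤ φ z' := by
  by_cases hz : z = 0
  · subst hz; simpa [hzero] using hnonneg z'
  have hzpos : 0 < ‖z‖ := norm_pos_iff.mpr hz
  have hz'pos : 0 < ‖z'‖ := lt_of_lt_of_le hzpos hnorm
  have hz' : z' ≠ 0 := norm_pos_iff.mp hz'pos
  set t : ℝ := ‖z‖ / ‖z'‖ with ht
  have htpos : 0 < t := div_pos hzpos hz'pos
  have htle : t ≤ 1 := (div_le_one hz'pos).mpr hnorm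
  set w : EuclideanSpace ℝ (Fin b) := t • z' with hw
  have hwnorm : ‖w‖ = ‖z‖ := by
    rw [hw, norm_smul, Real.norm_eq_abs, abs_of_pos htpos, ht]
    field_simp
  have hwcos : cosAngle w zh = cosAngle z zh := by
    rw [hw, cosAngle_smul z' zh t htpos hz', hcos]
  have h1 : φ w ≤ φ z := hP2 z w hwnorm.symm (le_of_eq hwcos.symm)
  have h2 : φ z ≤ φ w := hP2 w z hwnorm hwcos.le
  have h3 : φ w ≤ φ z' := by
    have := hconv.2 (Set.mem_univ z') (Set.mem_univ (0 : EuclideanSpace ℝ (Fin b)))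
      htpos.le (sub_nonneg.mpr htle) (by ring)
    simp only [smul_zero, add_zero, hzero, mul_zero] at this
    calc φ w ≤ t * φ z' := this
      _ ≤ 1 * φ z' := by nlinarith [hnonneg z']
      _ = φ z' := one_mul _
  linarith
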